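/- Let r ≥ 1, m = 2r, and let ρ_1, …, ρ_m be nonnegative real numbers. Then e_r(ρ_1², …, ρ_m²) ≥ C(m, r) · ρ_1ρ_2⋯ρ_m, where e_r is the r-th elementary symmetric polynomial in m variables and C(m,r) is the binomial coefficient. Moreover, equality holds if and only if either all the ρ_i are equal, or at least r+1 of the ρ_i are zero. -/

import Mathlib

open Finset

/-- Combinatorial characterization: the products over all `r`-subsets equal the
products over their complements iff all values are equal or at least `r+1` vanish. -/
lemma esymm_aux_prod_compl_iff (r : ℕ) (hr : 1 ≤ r) (ρ : Fin (2 * r) → ℝ)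
    (hρ : ∀ i, 0 ≤ ρ i) :
    (∀ s : Finset (Fin (2 * r)), s.card = r → ∏ i ∈ s, ρ i = ∏ i ∈ sᶜ, ρ i) ↔
      ((∀ i j, ρ i = ρ j) ∨
        r + 1 ≤ (Finset.univ.filter (fun i => ρ i = 0)).card) := by
  classical
  have hcardfin : Fintype.card (Fin (2 * r)) = 2 * r := Fintype.card_fin _
  constructor
  · intro H
    by_cases hZ : r + 1 ≤ (Finset.univ.filter (fun i => ρ i = 0)).card
    · exact Or.inr hZ
    left
    -- the set of nonzero indices has card ≥ r
    set N := Finset.univ.filter (fun i => ρ i ≠ 0) with hN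
    have hcards := Finset.card_filter_add_card_filter_not
      (s := (Finset.univ : Finset (Fin (2 * r)))) (p := fun i => ρ i = 0)
    rw [Finset.card_univ, hcardfin] at hcards
    have hNcard : r ≤ N.card := by
      have : (Finset.univ.filter (fun i => ¬ ρ i = 0)).card = N.card := rfl
      omega
    -- first: no value is zero
    have hpos : ∀ k, ρ k ≠ 0 := by
      intro k hk
      obtain ⟨s, hsN, hscard⟩ := Finset.exists_subset_card_eq hNcard
      have h1 := H s hscard
      have hs0 : ∏ i ∈ s, ρ i ≠ 0 :=
        Finset.prod_ne_zero_iff.2 fun i hi => (Finset.mem_filter.1 (hsN hi)).2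
      have hk' : k ∈ sᶜ := by
        rw [Finset.mem_compl]
        intro hks
        exact (Finset.mem_filter.1 (hsN hks)).2 hk
      have h0 : ∏ i ∈ sᶜ, ρ i = 0 := Finset.prod_eq_zero hk' hk
      rw [h1, h0] at hs0
      exact hs0 rfl
    intro i j
    by_cases hij : i = j
    · rw [hij]
    -- pick a set t of size r-1 avoiding i, j
    have hij2 : ({i, j} : Finset (Fin (2 * r))).card = 2 := by
      rw [Finset.card_insert_of_notMem (by simpa using hij), Finset.card_singleton]
    have hcard2 : r - 1 ≤ ((Finset.univ : Finset (Fin (2 * r))) \ {i, j}).card := by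
      rw [Finset.card_sdiff_of_subset (Finset.subset_univ _), Finset.card_univ, hcardfin, hij2]
      omega
    obtain ⟨t, ht, htcard⟩ := Finset.exists_subset_card_eq hcard2
    have hit : i ∉ t := fun h => by simpa using (Finset.mem_sdiff.1 (ht h)).2
    have hjt : j ∉ t := fun h => by simpa using (Finset.mem_sdiff.1 (ht h)).2
    set u := tᶜ \ {i, j} with hu
    have hiu : i ∉ u := fun h => by simpa using (Finset.mem_sdiff.1 h).2
    have hju : j ∉ u := fun h => by simpa using (Finset.mem_sdiff.1 h).2
    have hci : (insert i t)ᶜ = insert j u := by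
      ext x
      simp only [hu, Finset.mem_compl, Finset.mem_insert, Finset.mem_sdiff,
        Finset.mem_singleton, not_or]
      constructor
      · rintro ⟨hxi, hxt⟩
        by_cases hxj : x = j
        · exact Or.inl hxj
        · exact Or.inr ⟨hxt, hxi, hxj⟩
      · rintro (rfl | ⟨hxt, hxi, hxj⟩)
        · exact ⟨Ne.symm hij, hjt⟩
        · exact ⟨hxi, hxt⟩
    have hcj : (insert j t)ᶜ = insert i u := by
      ext x
      simp only [hu, Finset.mem_compl, Finset.mem_insert, Finset.mem_sdiff,
        Finset.mem_singleton, not_or]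
      constructor
      · rintro ⟨hxj, hxt⟩
        by_cases hxi : x = i
        · exact Or.inl hxi
        · exact Or.inr ⟨hxt, hxi, hxj⟩
      · rintro (rfl | ⟨hxt, hxi, hxj⟩)
        · exact ⟨hij, hit⟩
        · exact ⟨hxj, hxt⟩
    have hcardi : (insert i t).card = r := by
      rw [Finset.card_insert_of_notMem hit, htcard]; omega
    have hcardj : (insert j t).card = r := by
      rw [Finset.card_insert_of_notMem hjt, htcard]; omega
    have h1 := H (insert i t) hcardi
    have h2 := H (insert j t) hcardj
    rw [hci, Finset.prod_insert hit, Finset.prod_insert hju] at h1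
    rw [hcj, Finset.prod_insert hjt, Finset.prod_insert hiu] at h2
    have hT : ∏ k ∈ t, ρ k ≠ 0 := Finset.prod_ne_zero_iff.2 fun k _ => hpos k
    have h3 : ρ i ^ 2 * ∏ k ∈ t, ρ k = ρ j ^ 2 * ∏ k ∈ t, ρ k := by
      have a1 : ρ i * (ρ i * ∏ k ∈ t, ρ k) = ρ i * (ρ j * ∏ k ∈ u, ρ k) := by rw [h1]
      have a2 : ρ j * (ρ j * ∏ k ∈ t, ρ k) = ρ j * (ρ i * ∏ k ∈ u, ρ k) := by rw [h2]
      calc ρ i ^ 2 * ∏ k ∈ t, ρ k = ρ i * (ρ i * ∏ k ∈ t, ρ k) := by ring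
        _ = ρ i * (ρ j * ∏ k ∈ u, ρ k) := a1
        _ = ρ j * (ρ i * ∏ k ∈ u, ρ k) := by ring
        _ = ρ j * (ρ j * ∏ k ∈ t, ρ k) := a2.symm
        _ = ρ j ^ 2 * ∏ k ∈ t, ρ k := by ring
    have h4 : ρ i ^ 2 = ρ j ^ 2 := mul_right_cancel₀ hT h3
    rw [← Real.sqrt_sq (hρ i), h4, Real.sqrt_sq (hρ j)]
  · rintro (hall | hZ) s hs
    · -- all equal
      have h2r : 0 < 2 * r := by omega
      set i0 : Fin (2 * r) := ⟨0, h2r⟩ with hi0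
      have hcon : ∀ i, ρ i = ρ i0 := fun i => hall i i0
      have hsc : sᶜ.card = r := by
        rw [Finset.card_compl, hcardfin, hs]; omega
      rw [Finset.prod_congr rfl (fun i _ => hcon i),
        Finset.prod_congr rfl (fun i (_ : i ∈ sᶜ) => hcon i),
        Finset.prod_const, Finset.prod_const, hs, hsc]
    · -- many zeros
      set Z := Finset.univ.filter (fun i => ρ i = 0) with hZdef
      have hsc : sᶜ.card = r := by
        rw [Finset.card_compl, hcardfin, hs]; omega
      have h1 : ∃ i ∈ s, ρ i = 0 := by
        by_contra h
        push_neg at h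
        have hsub : Z ⊆ sᶜ := by
          intro z hz
          rw [Finset.mem_compl]
          intro hzs
          exact h z hzs (Finset.mem_filter.1 hz).2
        have := Finset.card_le_card hsub
        omega
      have h2 : ∃ i ∈ sᶜ, ρ i = 0 := by
        by_contra h
        push_neg at h
        have hsub : Z ⊆ s := by
          intro z hz
          by_contra hzs
          exact h z (Finset.mem_compl.2 hzs) (Finset.mem_filter.1 hz).2
        have := Finset.card_le_card hsub
        omega
      obtain ⟨i, hi, hi0⟩ := h1
      obtain ⟨j, hj, hj0⟩ := h2
      rw [Finset.prod_eq_zero hi hi0, Finset.prod_eq_zero hj hj0]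

/-- For `m = 2r` and nonnegative reals `ρ_1, …, ρ_m`, the `r`-th elementary symmetric
polynomial of the squares satisfies `e_r(ρ₁², …, ρ_m²) ≥ C(m, r)·ρ₁⋯ρ_m`, with equality
precisely when all the `ρ_i` are equal or at least `r+1` of them vanish. -/
theorem esymm_sq_ge_binom_prod (r : ℕ) (hr : 1 ≤ r) (ρ : Fin (2 * r) → ℝ)
    (hρ : ∀ i, 0 ≤ ρ i) :
    (((2 * r).choose r : ℝ) * ∏ i, ρ i ≤
        ∑ s ∈ Finset.powersetCard r (Finset.univ : Finset (Fin (2 * r))), ∏ i ∈ s, ρ i ^ 2) ∧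
    ((∑ s ∈ Finset.powersetCard r (Finset.univ : Finset (Fin (2 * r))), ∏ i ∈ s, ρ i ^ 2 =
        ((2 * r).choose r : ℝ) * ∏ i, ρ i) ↔
      ((∀ i j, ρ i = ρ j) ∨
        r + 1 ≤ (Finset.univ.filter (fun i => ρ i = 0)).card)) := by
  classical
  have hcardfin : Fintype.card (Fin (2 * r)) = 2 * r := Fintype.card_fin _
  set P : Finset (Finset (Fin (2 * r))) :=
    Finset.powersetCard r (Finset.univ : Finset (Fin (2 * r))) with hPdef
  have hmem : ∀ s : Finset (Fin (2 * r)), s ∈ P ↔ s.card = r := fun s =>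
    Finset.mem_powersetCard_univ
  have hcomplmem : ∀ s : Finset (Fin (2 * r)), s ∈ P → sᶜ ∈ P := by
    intro s hs
    rw [hmem] at hs ⊢
    rw [Finset.card_compl, hcardfin, hs]
    omega
  have hsum_compl : ∀ f : Finset (Fin (2 * r)) → ℝ,
      ∑ s ∈ P, f sᶜ = ∑ s ∈ P, f s := by
    intro f
    exact Finset.sum_nbij' (fun s => sᶜ) (fun s => sᶜ)
      hcomplmem hcomplmem (fun s _ => compl_compl s) (fun s _ => compl_compl s)
      (fun s _ => rfl)
  have hPcard : P.card = (2 * r).choose r := by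
    rw [hPdef, Finset.card_powersetCard, Finset.card_univ, hcardfin]
  have key : ∑ s ∈ P, (∏ i ∈ s, ρ i - ∏ i ∈ sᶜ, ρ i) ^ 2
      = 2 * (∑ s ∈ P, ∏ i ∈ s, ρ i ^ 2) - 2 * (((2 * r).choose r : ℝ) * ∏ i, ρ i) := by
    have expand : ∑ s ∈ P, (∏ i ∈ s, ρ i - ∏ i ∈ sᶜ, ρ i) ^ 2
        = ∑ s ∈ P, ((∏ i ∈ s, ρ i) ^ 2 + (∏ i ∈ sᶜ, ρ i) ^ 2 - 2 * ∏ i, ρ i) := by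
      refine Finset.sum_congr rfl fun s _ => ?_
      have h := Finset.prod_mul_prod_compl s ρ
      rw [← h]; ring
    rw [expand]
    rw [Finset.sum_sub_distrib, Finset.sum_add_distrib,
      hsum_compl (fun s => (∏ i ∈ s, ρ i) ^ 2), Finset.sum_const, hPcard]
    have : ∑ s ∈ P, ∏ i ∈ s, ρ i ^ 2 = ∑ s ∈ P, (∏ i ∈ s, ρ i) ^ 2 :=
      Finset.sum_congr rfl fun s _ => Finset.prod_pow s 2 ρ
    rw [this, nsmul_eq_mul]
    ring
  have hnn : ∀ s ∈ P, (0 : ℝ) ≤ (∏ i ∈ s, ρ i - ∏ i ∈ sᶜ, ρ i) ^ 2 :=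
    fun s _ => sq_nonneg _
  have hnonneg : 0 ≤ ∑ s ∈ P, (∏ i ∈ s, ρ i - ∏ i ∈ sᶜ, ρ i) ^ 2 :=
    Finset.sum_nonneg hnn
  constructor
  · linarith
  · rw [← esymm_aux_prod_compl_iff r hr ρ hρ]
    constructor
    · intro heq s hs
      have hz : ∑ s ∈ P, (∏ i ∈ s, ρ i - ∏ i ∈ sᶜ, ρ i) ^ 2 = 0 := by linarith
      have := (Finset.sum_eq_zero_iff_of_nonneg hnn).1 hz s ((hmem s).2 hs)
      exact sub_eq_zero.1 ((pow_eq_zero_iff two_ne_zero).mp this)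
    · intro h
      have hz : ∑ s ∈ P, (∏ i ∈ s, ρ i - ∏ i ∈ sᶜ, ρ i) ^ 2 = 0 := by
        refine Finset.sum_eq_zero fun s hs => ?_
        rw [h s ((hmem s).1 hs), sub_self]
        ring
      linarith
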